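/- If the greedy algorithm is started from any (n−1)-permutation other than the increasing permutation 12⋯(n−1), then its output does not cover the increasing n-permutation 12⋯n, and hence is not a universal word for n-permutations. -/

import Mathlib

/-- `c_b`: shift values `≥ b` up by one. -/
def cshift (b x : ℕ) : ℕ := if x < b then x else x + 1

/-- the `i`-th smallest entry of `w` (1-based). -/
def nthSmallest (w : List ℕ) (i : ℕ) : ℕ := (List.insertionSort (· ≤ ·) w).getD (i - 1) 0

/-- the new last letter of the `i`-th extension of `w`. -/
def extb (w : List ℕ) (i : ℕ) : ℕ :=
  if i ≤ w.length then nthSmallest w i else w.foldr max 0 + 1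

/-- the `i`-th extension of `w`, `1 ≤ i ≤ w.length + 1`. -/
def ext (i : ℕ) (w : List ℕ) : List ℕ :=
  w.map (cshift (extb w i)) ++ [extb w i]

/-- reduced form: replace the `i`-th smallest entry by `i`. -/
def red (w : List ℕ) : List ℕ := w.map (fun x => (w.filter (· ≤ x)).length)

/-- `w` covers the `n`-permutation `p` (given in reduced form):
some length-`n` factor of `w` is order-isomorphic to `p`. -/
def covers (w : List ℕ) (n : ℕ) (p : List ℕ) : Prop :=
  ∃ k, k + n ≤ w.length ∧ red ((w.drop k).take n) = p

/-- Boolean version of `covers`. -/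
def coversB (w : List ℕ) (n : ℕ) (p : List ℕ) : Bool :=
  (List.range w.length).any fun k =>
    decide (k + n ≤ w.length) && decide (red ((w.drop k).take n) = p)

/-- one step of the greedy algorithm: append the smallest extension of the last
`n-1` letters whose order-isomorphism type is not yet a length-`n` factor;
return `none` if no extension is possible (termination). -/
def greedyStep (n : ℕ) (w : List ℕ) : Option (List ℕ) :=
  let s := w.drop (w.length - (n - 1))
  match (List.range' 1 (s.length + 1)).find? (fun i => ! coversB w n (red (ext i s))) with
  | some i => some (w.map (cshift (extb s i)) ++ [extb s i])
  | none => none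

/-- `greedy n k` is `Π'_{n,k}`, the word after `k` steps of the greedy algorithm
started from `12⋯(n-1)` (constant once the algorithm has terminated). -/
def greedy (n : ℕ) : ℕ → List ℕ
  | 0 => List.range' 1 (n - 1)
  | k + 1 =>
    match greedyStep n (greedy n k) with
    | some w => w
    | none => greedy n k

/-- the greedy algorithm performs exactly `k` steps and then terminates. -/
def terminatesAt (n k : ℕ) : Prop :=
  (∀ j < k, greedyStep n (greedy n j) ≠ none) ∧ greedyStep n (greedy n k) = none

/-- the `i`-th letter `a_i` of a word (1-based). -/
def letter (w : List ℕ) (i : ℕ) : ℕ := w.getD (i - 1) 0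

/-- `σ_k`, the reduced form of the length-`n` factor starting at position `k` (1-based). -/
def sigma (w : List ℕ) (n k : ℕ) : List ℕ := red ((w.drop (k - 1)).take n)

/-- the greedy algorithm started from an arbitrary word `w0`. -/
def greedyFrom (n : ℕ) (w0 : List ℕ) : ℕ → List ℕ
  | 0 => w0
  | k + 1 =>
    match greedyStep n (greedyFrom n w0 k) with
    | some w => w
    | none => greedyFrom n w0 k

section Basic

lemma cshift_le_iff (b x y : ℕ) : cshift b x ≤ cshift b y ↔ x ≤ y := by
  unfold cshift; split <;> split <;> omega

lemma cshift_lt_iff (b x y : ℕ) : cshift b x < cshift b y ↔ x < y := by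
  unfold cshift; split <;> split <;> omega

lemma cshift_ne (b x : ℕ) : cshift b x ≠ b := by unfold cshift; split <;> omega

lemma cshift_le_b_iff (b x : ℕ) : cshift b x ≤ b ↔ x < b := by
  unfold cshift; split <;> omega

lemma cshift_injective (b : ℕ) : Function.Injective (cshift b) := by
  intro x y h
  have := (cshift_le_iff b x y).1 h.le
  have := (cshift_le_iff b y x).1 h.ge
  omega

lemma filter_map' (f : ℕ → ℕ) (q : ℕ → Bool) (l : List ℕ) :
    (l.map f).filter q = (l.filter (fun x => q (f x))).map f := by
  induction l with
  | nil => simp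
  | cons a t ih =>
    simp only [List.map_cons, List.filter_cons]
    by_cases h : q (f a) <;> simp [h, ih]

lemma red_length (w : List ℕ) : (red w).length = w.length := by simp [red]

lemma red_map (f : ℕ → ℕ) (hf : ∀ x y, f x ≤ f y ↔ x ≤ y) (l : List ℕ) :
    red (l.map f) = red l := by
  unfold red
  rw [List.map_map]
  apply List.map_congr_left
  intro a _
  simp only [Function.comp]
  rw [filter_map', List.length_map]
  congr 1
  apply List.filter_congr
  intro x _
  simp [hf]

lemma red_getElem (w : List ℕ) (a : ℕ) (h : a < w.length)
    (h' : a < (red w).length) : (red w)[a] = (w.filter (· ≤ w[a])).length := by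
  simp [red]

lemma cnt_strict_mono {w : List ℕ} {x y : ℕ} (hy : y ∈ w) (hxy : x < y) :
    (w.filter (· ≤ x)).length < (w.filter (· ≤ y)).length := by
  have hsub : (w.filter (· ≤ x)).Sublist (w.filter (· ≤ y)) := by
    apply List.monotone_filter_right
    intro a ha
    simp only [decide_eq_true_eq] at ha ⊢; omega
  rcases Nat.lt_or_ge (w.filter (· ≤ x)).length (w.filter (· ≤ y)).length with h | h
  · exact h
  · exfalso
    have heq : w.filter (· ≤ x) = w.filter (· ≤ y) :=
      hsub.eq_of_length (le_antisymm hsub.length_le h)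
    have hy' : y ∈ w.filter (· ≤ y) := by
      simp only [List.mem_filter, decide_eq_true_eq]; exact ⟨hy, le_refl y⟩
    rw [← heq] at hy'
    simp only [List.mem_filter, decide_eq_true_eq] at hy'
    omega

lemma cnt_mono {w : List ℕ} {x y : ℕ} (hxy : x ≤ y) :
    (w.filter (· ≤ x)).length ≤ (w.filter (· ≤ y)).length := by
  apply List.Sublist.length_le
  apply List.monotone_filter_right
  intro a ha
  simp only [decide_eq_true_eq] at ha ⊢; omega

/-- order comparisons are determined by `red`. -/
lemma red_lt_iff (w : List ℕ) (a b : ℕ) (ha : a < w.length) (hb : b < w.length)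
    (ha' : a < (red w).length) (hb' : b < (red w).length) :
    w[a] < w[b] ↔ (red w)[a] < (red w)[b] := by
  rw [red_getElem w a ha ha', red_getElem w b hb hb']
  constructor
  · intro h
    exact cnt_strict_mono (List.getElem_mem hb) h
  · intro h
    by_contra hc
    push_neg at hc
    exact absurd (cnt_mono (w := w) hc) (by omega)

end Basic

section Sorted

lemma filter_eq_take (p : ℕ → Bool) :
    ∀ (u : List ℕ) (k : ℕ), k ≤ u.length →
      (∀ i (h : i < u.length), (p u[i] = true ↔ i < k)) → u.filter p = u.take k := by
  intro u
  induction u with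
  | nil => intro k hk _; simp at hk; simp [hk]
  | cons a t ih =>
    intro k hk hik
    cases k with
    | zero =>
      have h0 : p a = false := by
        have := hik 0 (by simp)
        simpa using this
      have ht : t.filter p = [] := by
        apply List.filter_eq_nil_iff.2
        intro x hx
        obtain ⟨i, hi, rfl⟩ := List.getElem_of_mem hx
        have := hik (i+1) (by simpa using Nat.succ_lt_succ hi)
        simp only [List.getElem_cons_succ] at this
        simp [this]
      simp [List.filter_cons, h0, ht]
    | succ k =>
      have h0 : p a = true := by
        have := hik 0 (by simp)
        simpa using this
      rw [List.filter_cons, if_pos h0, List.take_succ_cons]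
      congr 1
      apply ih k (by simpa using hk)
      intro i hi
      have := hik (i+1) (by simpa using Nat.succ_lt_succ hi)
      simpa using this

lemma sorted_filter_le {u : List ℕ} (hu : u.Pairwise (· < ·)) (j : ℕ) (hj : j < u.length) :
    (u.filter (· ≤ u[j])).length = j + 1 := by
  rw [filter_eq_take _ u (j+1) (by omega)]
  · simp; omega
  · intro i hi
    simp only [decide_eq_true_eq]
    constructor
    · intro h
      by_contra hc
      have : u[j] < u[i] := List.pairwise_iff_getElem.1 hu j i hj hi (by omega)
      omega
    · intro h
      rcases Nat.lt_or_ge i j with h' | h'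
      · exact (List.pairwise_iff_getElem.1 hu i j hi hj h').le
      · have : i = j := by omega
        subst this; exact le_refl _

lemma sorted_filter_lt {u : List ℕ} (hu : u.Pairwise (· < ·)) (j : ℕ) (hj : j < u.length) :
    (u.filter (· < u[j])).length = j := by
  rw [filter_eq_take _ u j (by omega)]
  · simp; omega
  · intro i hi
    simp only [decide_eq_true_eq]
    constructor
    · intro h
      by_contra hc
      have h' : j ≤ i := by omega
      rcases Nat.lt_or_ge j i with h'' | h''
      · have : u[j] < u[i] := List.pairwise_iff_getElem.1 hu j i hj hi h''
        omega
      · have : i = j := by omega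
        subst this; omega
    · intro h
      exact List.pairwise_iff_getElem.1 hu i j hi hj h

/-- for sorted `u`: `a < u[j] ↔ #{x ∈ u : x ≤ a} ≤ j`. -/
lemma lt_getElem_iff {u : List ℕ} (hu : u.Pairwise (· < ·)) (a j : ℕ) (hj : j < u.length) :
    a < u[j] ↔ (u.filter (· ≤ a)).length ≤ j := by
  constructor
  · intro h
    have hsub : (u.filter (· ≤ a)).Sublist (u.filter (· < u[j])) := by
      apply List.monotone_filter_right
      intro x hx
      simp only [decide_eq_true_eq] at hx ⊢
      omega
    have := hsub.length_le
    rw [sorted_filter_lt hu j hj] at this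
    exact this
  · intro h
    by_contra hc
    push_neg at hc
    have : (u.filter (· ≤ u[j])).length ≤ (u.filter (· ≤ a)).length := cnt_mono hc
    rw [sorted_filter_le hu j hj] at this
    omega

lemma red_eq_range'_of_sorted {u : List ℕ} (hu : u.Pairwise (· < ·)) :
    red u = List.range' 1 u.length := by
  apply List.ext_getElem (by simp [red_length])
  intro i h1 h2
  rw [red_getElem u i (by rwa [red_length] at h1) h1, sorted_filter_le hu i (by rwa [red_length] at h1),
    List.getElem_range']
  omega

lemma sorted_of_red_eq_range' {u : List ℕ} (h : red u = List.range' 1 u.length) :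
    u.Pairwise (· < ·) := by
  apply List.pairwise_iff_getElem.2
  intro i j hi hj hij
  have hi' : i < (red u).length := by rwa [red_length]
  have hj' : j < (red u).length := by rwa [red_length]
  rw [red_lt_iff u i j hi hj hi' hj']
  have e1 : (red u)[i] = 1 + i := by
    rw [List.getElem_of_eq h hi', List.getElem_range']; ring
  have e2 : (red u)[j] = 1 + j := by
    rw [List.getElem_of_eq h hj', List.getElem_range']; ring
  omega

/-- sortedness of a prefix is transferred through equal `red`s. -/
lemma sorted_take_of_red_eq {U V : List ℕ} (h : red U = red V) (t : ℕ)
    (hV : (V.take t).Pairwise (· < ·)) : (U.take t).Pairwise (· < ·) := by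
  have hlen : U.length = V.length := by
    have := congrArg List.length h
    simpa [red_length] using this
  apply List.pairwise_iff_getElem.2
  intro i j hi hj hij
  have hi0 : i < U.length := lt_of_lt_of_le hi (by simp [List.length_take])
  have hj0 : j < U.length := lt_of_lt_of_le hj (by simp [List.length_take])
  have hiV : i < (V.take t).length := by simpa [List.length_take, hlen] using hi
  have hjV : j < (V.take t).length := by simpa [List.length_take, hlen] using hj
  have hVij : V[i]'(by rw [← hlen]; exact hi0) < V[j]'(by rw [← hlen]; exact hj0) := by
    have := List.pairwise_iff_getElem.1 hV i j hiV hjV hij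
    simpa [List.getElem_take] using this
  rw [List.getElem_take, List.getElem_take]
  rw [red_lt_iff U i j hi0 hj0 (by rwa [red_length]) (by rwa [red_length]),
    List.getElem_of_eq h (by rwa [red_length]), List.getElem_of_eq h (by rwa [red_length]),
    ← red_lt_iff V i j (by rwa [← hlen]) (by rwa [← hlen]) (by rw [red_length, ← hlen]; exact hi0)
      (by rw [red_length, ← hlen]; exact hj0)]
  exact hVij

end Sorted

section Cons

lemma red_cons_sorted {a : ℕ} {u : List ℕ} (hu : u.Pairwise (· < ·)) (ha : a ∉ u) :
    red (a :: u) =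
      (1 + (u.filter (· ≤ a)).length) ::
        ((List.range u.length).map fun j =>
          if j < (u.filter (· ≤ a)).length then j + 1 else j + 2) := by
  set c := (u.filter (· ≤ a)).length with hc
  unfold red
  rw [List.map_cons]
  congr 1
  · rw [List.filter_cons, if_pos (by simp)]
    simp only [List.length_cons]
    omega
  · apply List.ext_getElem (by simp)
    intro j hj hj'
    have hju : j < u.length := by simpa using hj
    rw [List.getElem_map, List.getElem_map, List.getElem_range]
    have hcons : ((a :: u).filter (· ≤ u[j])).length =
        (if a ≤ u[j] then 1 else 0) + (u.filter (· ≤ u[j])).length := by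
      rw [List.filter_cons]
      by_cases h : a ≤ u[j] <;> simp [h] <;> omega
    rw [hcons, sorted_filter_le hu j hju]
    have hne : a ≠ u[j] := fun h => ha (h ▸ List.getElem_mem hju)
    by_cases h : c ≤ j
    · have : a < u[j] := (lt_getElem_iff hu a j hju).2 h
      rw [if_pos this.le, if_neg (by omega)]
      omega
    · have : ¬ a < u[j] := fun hlt => h ((lt_getElem_iff hu a j hju).1 hlt)
      have : u[j] < a := by omega
      rw [if_neg (by omega), if_pos (by omega)]
      omega

lemma red_cons_head_det {a a' : ℕ} {u u' : List ℕ}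
    (hu : u.Pairwise (· < ·)) (hu' : u'.Pairwise (· < ·)) (ha : a ∉ u) (ha' : a' ∉ u')
    (hlen : u.length = u'.length)
    (hh : (red (a :: u)).headD 0 = (red (a' :: u')).headD 0) :
    red (a :: u) = red (a' :: u') := by
  rw [red_cons_sorted hu ha] at hh ⊢
  rw [red_cons_sorted hu' ha'] at hh ⊢
  simp only [List.headD_cons] at hh
  have : (u.filter (· ≤ a)).length = (u'.filter (· ≤ a')).length := by omega
  rw [this, hlen]

end Cons

section NthSmallest

lemma insertionSort_sorted_lt {s : List ℕ} (hs : s.Nodup) :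
    (List.insertionSort (· ≤ ·) s).Pairwise (· < ·) := by
  have h1 : (List.insertionSort (· ≤ ·) s).Pairwise (· ≤ ·) :=
    List.pairwise_insertionSort _ s
  have h2 : (List.insertionSort (· ≤ ·) s).Nodup :=
    (List.perm_insertionSort _ s).nodup_iff.2 hs
  have := List.Pairwise.and h1 h2
  apply this.imp
  rintro x y ⟨hle, hne⟩
  omega

lemma nthSmallest_mem {s : List ℕ} {j : ℕ} (hj1 : 1 ≤ j) (hj2 : j ≤ s.length) :
    nthSmallest s j ∈ s := by
  unfold nthSmallest
  have hlen : (List.insertionSort (· ≤ ·) s).length = s.length := by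
    exact (List.perm_insertionSort _ s).length_eq
  have hjl : j - 1 < (List.insertionSort (· ≤ ·) s).length := by omega
  rw [List.getD_eq_getElem _ _ hjl]
  exact (List.perm_insertionSort _ s).mem_iff.1 (List.getElem_mem hjl)

lemma cnt_lt_nthSmallest {s : List ℕ} (hs : s.Nodup) {j : ℕ} (hj1 : 1 ≤ j)
    (hj2 : j ≤ s.length) :
    (s.filter (· < nthSmallest s j)).length = j - 1 := by
  set t := List.insertionSort (· ≤ ·) s with ht
  have hperm : t.Perm s := List.perm_insertionSort _ s
  have hlen : t.length = s.length := hperm.length_eq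
  have hjl : j - 1 < t.length := by omega
  have hb : nthSmallest s j = t[j-1] := by
    unfold nthSmallest
    rw [← ht, List.getD_eq_getElem _ _ hjl]
  rw [hb]
  have := (hperm.filter (· < t[j-1])).length_eq
  rw [← this, sorted_filter_lt (insertionSort_sorted_lt hs) (j-1) hjl]

end NthSmallest

section Ext

lemma ext_eq (i : ℕ) (s : List ℕ) :
    ext i s = s.map (cshift (extb s i)) ++ [extb s i] := rfl

lemma ext_length (i : ℕ) (s : List ℕ) : (ext i s).length = s.length + 1 := by
  simp [ext]

lemma ext_nodup {s : List ℕ} (hs : s.Nodup) (i : ℕ) : (ext i s).Nodup := by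
  rw [ext_eq]
  apply List.Nodup.append
  · exact hs.map (cshift_injective _)
  · simp
  · intro x hx
    simp only [List.mem_map] at hx
    obtain ⟨y, _, rfl⟩ := hx
    simp only [List.mem_singleton]
    exact cshift_ne _ _

lemma ext_take_map (i : ℕ) (s : List ℕ) :
    (ext i s).take s.length = s.map (cshift (extb s i)) := by
  rw [ext_eq, List.take_append]
  simp

lemma ext_take_sorted {s : List ℕ} (hs : s.Pairwise (· < ·)) (i : ℕ) :
    ((ext i s).take s.length).Pairwise (· < ·) := by
  rw [ext_take_map]
  exact List.pairwise_map.mpr (hs.imp fun h => (cshift_lt_iff _ _ _).2 h)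

/-- the last entry of `red (ext j s)` is `j`, for `1 ≤ j ≤ s.length`. -/
lemma red_ext_last {s : List ℕ} (hs : s.Nodup) {j : ℕ} (hj1 : 1 ≤ j) (hj2 : j ≤ s.length) :
    (red (ext j s)).getD s.length 0 = j := by
  have h : s.length < (red (ext j s)).length := by rw [red_length, ext_length]; omega
  have hb : extb s j = nthSmallest s j := by unfold extb; rw [if_pos hj2]
  have hlast : (ext j s)[s.length]'(by rw [ext_length]; omega) = extb s j := by
    rw [List.getElem_of_eq (ext_eq j s), List.getElem_append_right (by simp)]
    simp
  rw [List.getD_eq_getElem _ _ h]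
  rw [red_getElem _ _ (by rw [ext_length]; omega) h, hlast]
  rw [ext_eq, List.filter_append, List.length_append]
  have h2 : (List.filter (fun x => decide (x ≤ extb s j)) [extb s j]).length = 1 := by simp
  have h1 : ((s.map (cshift (extb s j))).filter (fun x => decide (x ≤ extb s j))).length
      = j - 1 := by
    rw [filter_map', List.length_map]
    have he : (s.filter fun x => decide (cshift (extb s j) x ≤ extb s j))
        = s.filter (· < extb s j) := by
      apply List.filter_congr
      intro x _
      simp [cshift_le_b_iff]
    rw [he, hb]
    exact cnt_lt_nthSmallest hs hj1 hj2
  rw [h1, h2]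
  omega

end Ext

section Covers

lemma window_old (w : List ℕ) (f : ℕ → ℕ) (c : ℕ) {k n : ℕ} (h : k + n ≤ w.length) :
    ((w.map f ++ [c]).drop k).take n = ((w.drop k).take n).map f := by
  have hk : k ≤ (w.map f).length := by simp; omega
  rw [List.drop_append, Nat.sub_eq_zero_of_le hk, List.drop_zero,
    List.take_append]
  have hlen : n ≤ ((w.map f).drop k).length := by simp; omega
  rw [Nat.sub_eq_zero_of_le hlen]
  simp [List.map_take, List.map_drop]

lemma covers_step {w p : List ℕ} {n : ℕ} (b c : ℕ) (h : covers w n p) :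
    covers (w.map (cshift b) ++ [c]) n p := by
  obtain ⟨k, hk, hr⟩ := h
  refine ⟨k, by simp; omega, ?_⟩
  rw [window_old w _ c hk, red_map _ (cshift_le_iff b) _]
  exact hr

lemma coversB_iff {w p : List ℕ} {n : ℕ} (hn : 1 ≤ n) :
    coversB w n p = true ↔ covers w n p := by
  unfold coversB covers
  rw [List.any_eq_true]
  constructor
  · rintro ⟨k, _, hk⟩
    rw [Bool.and_eq_true, decide_eq_true_eq, decide_eq_true_eq] at hk
    exact ⟨k, hk.1, hk.2⟩
  · rintro ⟨k, h1, h2⟩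
    exact ⟨k, List.mem_range.2 (by omega), by
      rw [Bool.and_eq_true, decide_eq_true_eq, decide_eq_true_eq]; exact ⟨h1, h2⟩⟩

lemma window_cons (w : List ℕ) {q n : ℕ} (hq : 1 ≤ q) (h : q - 1 < w.length) (hn : 1 ≤ n) :
    (w.drop (q-1)).take n = w[q-1] :: ((w.drop q).take (n-1)) := by
  rw [List.drop_eq_getElem_cons h]
  have hq' : q - 1 + 1 = q := by omega
  rw [hq']
  cases n with
  | zero => omega
  | succ n =>
    rw [List.take_succ_cons]
    simp

lemma find?_range'_spec {m i : ℕ} {p : ℕ → Bool}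
    (h : (List.range' 1 m).find? p = some i) :
    p i = true ∧ 1 ≤ i ∧ i < 1 + m ∧ ∀ j, 1 ≤ j → j < i → p j = false := by
  obtain ⟨hp, as, bs, heq, hmin⟩ := List.find?_eq_some_iff_append.1 h
  have hmem : i ∈ List.range' 1 m := by
    rw [heq]
    exact List.mem_append_right _ List.mem_cons_self
  rw [List.mem_range'_1] at hmem
  have hlen : as.length < (List.range' 1 m).length := by
    rw [heq]; simp
  have hi : i = 1 + as.length := by
    have h1 : (List.range' 1 m)[as.length]'hlen = i := by
      rw [List.getElem_of_eq heq hlen, List.getElem_append_right (le_refl _)]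
      simp
    rw [List.getElem_range'] at h1
    omega
  refine ⟨hp, hmem.1, hmem.2, ?_⟩
  intro j hj1 hj2
  have hjlen : j - 1 < as.length := by omega
  have hjlen' : j - 1 < (List.range' 1 m).length := by simp at hlen ⊢; omega
  have hj : as[j-1] = j := by
    have : (List.range' 1 m)[j-1]'hjlen' = as[j-1] := by
      rw [List.getElem_of_eq heq hjlen', List.getElem_append_left hjlen]
    rw [List.getElem_range'] at this
    omega
  have : j ∈ as := hj ▸ List.getElem_mem hjlen
  have := hmin j this
  simpa using this

end Covers

section Invariant

variable (n : ℕ)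

structure Good (w : List ℕ) : Prop where
  len : n - 1 ≤ w.length
  nodup : w.Nodup
  first : ¬ (w.take (n-1)).Pairwise (· < ·)
  dist : ∀ k1 k2, k1 < k2 → k2 + n ≤ w.length →
    red ((w.drop k1).take n) ≠ red ((w.drop k2).take n)
  noinc : ¬ covers w n (List.range' 1 n)

lemma range'_sorted (a m : ℕ) : (List.range' a m).Pairwise (· < ·) := by
  apply List.pairwise_iff_getElem.2
  intro i j hi hj hij
  rw [List.getElem_range', List.getElem_range']
  omega

lemma good_init (hn : 2 ≤ n) (w0 : List ℕ) (hw0 : w0.Perm (List.range' 1 (n - 1)))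
    (hne : w0 ≠ List.range' 1 (n - 1)) : Good n w0 := by
  have hlen : w0.length = n - 1 := by rw [hw0.length_eq]; simp
  constructor
  · omega
  · exact hw0.nodup_iff.2 List.nodup_range'
  · intro hsort
    rw [← hlen, List.take_length] at hsort
    haveI : IsAntisymm ℕ (· < ·) := ⟨fun a b h1 h2 => absurd h2 (asymm h1)⟩
    exact hne (List.Perm.eq_of_pairwise (fun a b _ _ h1 h2 => absurd h2 (asymm h1)) hsort (range'_sorted _ _) hw0)
  · intro k1 k2 h12 hk2
    omega
  · rintro ⟨k, hk, -⟩
    omega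

end Invariant

section Rho

lemma window_nodup {w : List ℕ} (hw : w.Nodup) (k n : ℕ) : ((w.drop k).take n).Nodup :=
  ((List.take_sublist _ _).trans (List.drop_sublist _ _)).nodup hw

lemma adm_pos {n : ℕ} (hn : 2 ≤ n) {w : List ℕ} (G : Good n w) {q : ℕ}
    (hsort : ((w.drop q).take (n-1)).Pairwise (· < ·)) : 1 ≤ q := by
  by_contra h
  have : q = 0 := by omega
  subst this
  rw [List.drop_zero] at hsort
  exact G.first hsort

lemma rho_bound {n : ℕ} (hn : 2 ≤ n) {w : List ℕ} (G : Good n w) {q : ℕ}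
    (h1 : 1 ≤ q) (h2 : q + (n-1) ≤ w.length)
    (hsort : ((w.drop q).take (n-1)).Pairwise (· < ·)) :
    2 ≤ (red ((w.drop (q-1)).take n)).headD 0 ∧
      (red ((w.drop (q-1)).take n)).headD 0 ≤ n := by
  have hq1 : q - 1 < w.length := by omega
  have hwc := window_cons w (q := q) (n := n) h1 hq1 (by omega)
  have hWnodup : (w[q-1]'hq1 :: ((w.drop q).take (n-1))).Nodup := by
    rw [← hwc]; exact window_nodup G.nodup _ _
  obtain ⟨ha, hu⟩ := List.nodup_cons.1 hWnodup
  have hred := red_cons_sorted (a := w[q-1]'hq1) hsort ha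
  have hulen : ((w.drop q).take (n-1)).length = n - 1 := by
    simp [List.length_take]; omega
  set c := (((w.drop q).take (n-1)).filter (· ≤ w[q-1]'hq1)).length with hc
  have hcle : c ≤ n - 1 := by
    have h := List.length_filter_le (· ≤ w[q-1]'hq1) ((w.drop q).take (n-1))
    rw [← hc] at h
    omega
  have hhead : (red ((w.drop (q-1)).take n)).headD 0 = 1 + c := by
    rw [hwc, hred]; simp
  have hcpos : 1 ≤ c := by
    by_contra hc0
    have hc0' : c = 0 := by omega
    have hfil : ((w.drop q).take (n-1)).filter (· ≤ w[q-1]'hq1) = [] :=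
      List.length_eq_zero_iff.1 (by rw [← hc]; exact hc0')
    have hlt : ∀ x ∈ (w.drop q).take (n-1), w[q-1]'hq1 < x := by
      intro x hx
      by_contra hle
      have : x ∈ ((w.drop q).take (n-1)).filter (· ≤ w[q-1]'hq1) := by
        rw [List.mem_filter]
        exact ⟨hx, by simp; omega⟩
      rw [hfil] at this
      simp at this
    have hWsort : (w[q-1]'hq1 :: ((w.drop q).take (n-1))).Pairwise (· < ·) :=
      List.pairwise_cons.2 ⟨hlt, hsort⟩
    have hWlen : (w[q-1]'hq1 :: ((w.drop q).take (n-1))).length = n := by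
      simp [hulen]; omega
    apply G.noinc
    refine ⟨q - 1, by omega, ?_⟩
    rw [hwc, red_eq_range'_of_sorted hWsort, hWlen]
  exact ⟨by omega, by omega⟩

lemma rho_inj {n : ℕ} (hn : 2 ≤ n) {w : List ℕ} (G : Good n w) {q q' : ℕ}
    (h1 : 1 ≤ q) (h2 : q + (n-1) ≤ w.length)
    (hsort : ((w.drop q).take (n-1)).Pairwise (· < ·))
    (h1' : 1 ≤ q') (h2' : q' + (n-1) ≤ w.length)
    (hsort' : ((w.drop q').take (n-1)).Pairwise (· < ·))
    (heq : (red ((w.drop (q-1)).take n)).headD 0 = (red ((w.drop (q'-1)).take n)).headD 0) :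
    q = q' := by
  have hq1 : q - 1 < w.length := by omega
  have hq1' : q' - 1 < w.length := by omega
  have hwc := window_cons w (q := q) (n := n) h1 hq1 (by omega)
  have hwc' := window_cons w (q := q') (n := n) h1' hq1' (by omega)
  obtain ⟨ha, hu⟩ := List.nodup_cons.1 (hwc ▸ window_nodup G.nodup (q-1) n)
  obtain ⟨ha', hu'⟩ := List.nodup_cons.1 (hwc' ▸ window_nodup G.nodup (q'-1) n)
  have hulen : ((w.drop q).take (n-1)).length = n - 1 := by
    simp [List.length_take]; omega
  have hulen' : ((w.drop q').take (n-1)).length = n - 1 := by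
    simp [List.length_take]; omega
  have hredeq : red ((w.drop (q-1)).take n) = red ((w.drop (q'-1)).take n) := by
    rw [hwc, hwc'] at heq ⊢
    exact red_cons_head_det hsort hsort' ha ha' (by omega) heq
  by_contra hne
  rcases Nat.lt_or_ge q q' with h | h
  · exact G.dist (q-1) (q'-1) (by omega) (by omega) hredeq
  · exact G.dist (q'-1) (q-1) (by omega) (by omega) hredeq.symm

end Rho

section Critical

lemma critical {n : ℕ} (hn : 2 ≤ n) {w : List ℕ} (G : Good n w) {i : ℕ}
    (hfind : (List.range' 1 ((w.drop (w.length - (n-1))).length + 1)).find?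
      (fun j => ! coversB w n (red (ext j (w.drop (w.length - (n-1)))))) = some i) :
    red (ext i (w.drop (w.length - (n-1)))) ≠ List.range' 1 n := by
  intro hred
  have hLge : n - 1 ≤ w.length := G.len
  set s := w.drop (w.length - (n-1)) with hs
  have hslen : s.length = n - 1 := by rw [hs]; simp; omega
  obtain ⟨hpi, hi1, hi2, hmin⟩ := find?_range'_spec hfind
  have hWlen : (ext i s).length = n := by rw [ext_length]; omega
  have hWsort : (ext i s).Pairwise (· < ·) :=
    sorted_of_red_eq_range' (by rw [hWlen]; exact hred)
  have hssort : s.Pairwise (· < ·) := by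
    have h1 : (s.map (cshift (extb s i))).Pairwise (· < ·) := by
      have h2 := hWsort
      rw [ext_eq] at h2
      exact List.Pairwise.sublist (List.sublist_append_left _ _) h2
    exact List.pairwise_map.1 h1 |>.imp (fun h => (cshift_lt_iff _ _ _).1 h)
  have hieq : i = s.length + 1 := by
    by_contra hne
    have hile : i ≤ s.length := by omega
    have hbmem : extb s i ∈ s := by
      unfold extb; rw [if_pos hile]; exact nthSmallest_mem hi1 hile
    have h2 : List.Pairwise (· < ·) (s.map (cshift (extb s i)) ++ [extb s i]) :=
      ext_eq i s ▸ hWsort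
    have hlt := (List.pairwise_append.1 h2).2.2 (cshift (extb s i) (extb s i))
      (List.mem_map_of_mem hbmem) (extb s i) (by simp)
    unfold cshift at hlt
    simp at hlt
  rcases Nat.lt_or_ge w.length n with hL | hL
  · -- w.length = n - 1, so s = w and w is sorted, contradicting `first`
    have hwl : w.length = n - 1 := by omega
    have hs0 : s = w := by rw [hs, hwl]; simp
    have htw : w.take (n-1) = w := by rw [← hwl]; exact List.take_length
    exact G.first (by rw [htw, ← hs0]; exact hssort)
  -- main case : n ≤ w.length
  have hcov : ∀ j, 1 ≤ j → j ≤ n - 1 → covers w n (red (ext j s)) := by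
    intro j h1 h2
    have hj := hmin j h1 (by omega)
    have hb : coversB w n (red (ext j s)) = true := by
      rcases Bool.eq_false_or_eq_true (coversB w n (red (ext j s))) with h | h
      · exact h
      · rw [h] at hj; simp at hj
    exact (coversB_iff (by omega)).1 hb
  have hcovE : ∀ j : ℕ, ∃ kk : ℕ, 1 ≤ j → j ≤ n - 1 →
      kk + n ≤ w.length ∧ red ((w.drop kk).take n) = red (ext j s) := by
    intro j
    by_cases h : 1 ≤ j ∧ j ≤ n - 1
    · obtain ⟨kk, h1, h2⟩ := hcov j h.1 h.2
      exact ⟨kk, fun _ _ => ⟨h1, h2⟩⟩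
    · exact ⟨0, fun a b => absurd ⟨a, b⟩ h⟩
  choose K hK using hcovE
  -- facts about the witnesses
  have hKsort : ∀ j, 1 ≤ j → j ≤ n - 1 →
      ((w.drop (K j)).take (n-1)).Pairwise (· < ·) := by
    intro j h1 h2
    have hU := (hK j h1 h2).2
    have hVtake : ((ext j s).take (n-1)).Pairwise (· < ·) := by
      have := ext_take_sorted hssort j
      rwa [hslen] at this
    have := sorted_take_of_red_eq hU (n-1) hVtake
    rwa [List.take_take, Nat.min_eq_left (by omega)] at this
  have hKval : ∀ j, 1 ≤ j → j ≤ n - 1 →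
      (red ((w.drop (K j)).take n)).getD (n-1) 0 = j := by
    intro j h1 h2
    have hU := (hK j h1 h2).2
    have hnodups : s.Nodup := List.Nodup.sublist (List.drop_sublist _ _) G.nodup
    have hlast := red_ext_last hnodups h1 (by omega)
    rw [hU, ← hslen]
    exact hlast
  -- the map `j ↦ ρ (Q j)`
  have hQstar1 : 1 ≤ w.length - (n-1) := by omega
  have hQstar2 : (w.length - (n-1)) + (n-1) ≤ w.length := by omega
  have hQstarsort : ((w.drop (w.length - (n-1))).take (n-1)).Pairwise (· < ·) := by
    have h0 : (w.drop (w.length - (n-1))).take (n-1) = s := by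
      rw [← hs]
      exact List.take_of_length_le (by omega)
    rw [h0]; exact hssort
  -- pigeonhole
  have hcard := Finset.card_le_card_of_injOn
    (f := fun j => (red ((w.drop ((if j = n then w.length - (n-1) else K j) - 1)).take n)).headD 0)
    (s := Finset.Icc 1 n) (t := Finset.Icc 2 n)
    (by
      intro j hj
      dsimp only
      simp only [Finset.mem_Icc, Finset.coe_Icc, Set.mem_Icc, Finset.mem_coe] at hj
      by_cases h : j = n
      · rw [if_pos h]
        have := rho_bound hn G hQstar1 hQstar2 hQstarsort
        simp only [Finset.mem_Icc, Finset.coe_Icc, Set.mem_Icc, Finset.mem_coe]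
        omega
      · rw [if_neg h]
        have hj2 : j ≤ n - 1 := by omega
        have hks := hKsort j hj.1 hj2
        have hk1 : 1 ≤ K j := adm_pos hn G hks
        have hk2 : K j + (n-1) ≤ w.length := by have := (hK j hj.1 hj2).1; omega
        have := rho_bound hn G hk1 hk2 hks
        simp only [Finset.mem_Icc, Finset.coe_Icc, Set.mem_Icc, Finset.mem_coe]
        omega)
    (by
      intro j hj j' hj' heq
      dsimp only at heq
      simp only [Finset.mem_Icc, Finset.coe_Icc, Set.mem_Icc] at hj hj'
      -- admissibility data for both
      have hadm : ∀ jj, 1 ≤ jj → jj ≤ n →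
          1 ≤ (if jj = n then w.length - (n-1) else K jj) ∧
          (if jj = n then w.length - (n-1) else K jj) + (n-1) ≤ w.length ∧
          ((w.drop (if jj = n then w.length - (n-1) else K jj)).take (n-1)).Pairwise (· < ·) := by
        intro jj hjj1 hjj2
        by_cases h : jj = n
        · rw [if_pos h]; exact ⟨hQstar1, hQstar2, hQstarsort⟩
        · rw [if_neg h]
          have hjj2' : jj ≤ n - 1 := by omega
          have hks := hKsort jj hjj1 hjj2'
          exact ⟨adm_pos hn G hks, by have := (hK jj hjj1 hjj2').1; omega, hks⟩
      obtain ⟨ha1, ha2, ha3⟩ := hadm j hj.1 hj.2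
      obtain ⟨hb1, hb2, hb3⟩ := hadm j' hj'.1 hj'.2
      have hQeq : (if j = n then w.length - (n-1) else K j) = (if j' = n then w.length - (n-1) else K j') :=
        rho_inj hn G ha1 ha2 ha3 hb1 hb2 hb3 heq
      -- now deduce j = j'
      by_cases h : j = n <;> by_cases h' : j' = n
      · rw [h, h']
      · exfalso
        rw [if_pos h, if_neg h'] at hQeq
        have := (hK j' hj'.1 (by omega)).1
        omega
      · exfalso
        rw [if_neg h, if_pos h'] at hQeq
        have := (hK j hj.1 (by omega)).1
        omega
      · rw [if_neg h, if_neg h'] at hQeq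
        have hj2 : j ≤ n - 1 := by omega
        have hj2' : j' ≤ n - 1 := by omega
        have hv := hKval j hj.1 hj2
        have hv' := hKval j' hj'.1 hj2'
        rw [← hQeq] at hv'
        omega)
  rw [Nat.card_Icc, Nat.card_Icc] at hcard
  omega

end Critical

section Step

lemma greedyStep_some {n : ℕ} {w v : List ℕ} (h : greedyStep n w = some v) :
    ∃ i, (List.range' 1 ((w.drop (w.length - (n-1))).length + 1)).find?
        (fun j => ! coversB w n (red (ext j (w.drop (w.length - (n-1)))))) = some i ∧
      v = w.map (cshift (extb (w.drop (w.length - (n-1))) i))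
        ++ [extb (w.drop (w.length - (n-1))) i] := by
  unfold greedyStep at h
  have h' : (match (List.range' 1 ((w.drop (w.length - (n-1))).length + 1)).find?
        (fun j => ! coversB w n (red (ext j (w.drop (w.length - (n-1)))))) with
    | some i => some (w.map (cshift (extb (w.drop (w.length - (n-1))) i))
        ++ [extb (w.drop (w.length - (n-1))) i])
    | none => none) = some v := h
  split at h'
  · next i hfind =>
    exact ⟨i, hfind, (Option.some.inj h').symm⟩
  · exact absurd h' (by simp)

lemma window_new (w : List ℕ) (f : ℕ → ℕ) (c : ℕ) {n : ℕ} (hn : 1 ≤ n)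
    (hlen : n - 1 ≤ w.length) :
    ((w.map f ++ [c]).drop (w.length + 1 - n)).take n
      = (w.drop (w.length - (n-1))).map f ++ [c] := by
  have hk : w.length + 1 - n ≤ (w.map f).length := by simp; omega
  rw [List.drop_append, Nat.sub_eq_zero_of_le hk, List.drop_zero,
    List.take_append]
  have h1 : ((w.map f).drop (w.length + 1 - n)).length = n - 1 := by simp; omega
  rw [List.take_of_length_le (by omega), h1]
  have h2 : n - (n - 1) = 1 := by omega
  rw [h2]
  simp only [List.take_length, ← List.map_drop]
  have h3 : w.length + 1 - n = w.length - (n-1) := by omega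
  rw [h3]
  simp

lemma good_step {n : ℕ} (hn : 2 ≤ n) {w v : List ℕ} (G : Good n w)
    (h : greedyStep n w = some v) : Good n v := by
  obtain ⟨i, hfind, rfl⟩ := greedyStep_some h
  have hLge : n - 1 ≤ w.length := G.len
  set s := w.drop (w.length - (n-1)) with hs
  have hslen : s.length = n - 1 := by rw [hs]; simp; omega
  obtain ⟨hpi, hi1, hi2, hmin⟩ := find?_range'_spec hfind
  have hnotcov : ¬ covers w n (red (ext i s)) := by
    intro hc
    have hb := (coversB_iff (w := w) (p := red (ext i s)) (by omega)).2 hc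
    rw [hb] at hpi
    simp at hpi
  have hvlen : (w.map (cshift (extb s i)) ++ [extb s i]).length = w.length + 1 := by
    simp
  have hwnew : ((w.map (cshift (extb s i)) ++ [extb s i]).drop (w.length + 1 - n)).take n
      = ext i s := by
    rw [window_new w _ _ (by omega) hLge, ← hs, ← ext_eq]
  constructor
  · rw [hvlen]; omega
  · apply List.Nodup.append (G.nodup.map (cshift_injective _)) (by simp)
    intro x hx
    simp only [List.mem_map] at hx
    obtain ⟨y, _, rfl⟩ := hx
    simp only [List.mem_singleton]
    exact cshift_ne _ _
  · have htake : (w.map (cshift (extb s i)) ++ [extb s i]).take (n-1)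
        = (w.take (n-1)).map (cshift (extb s i)) := by
      rw [List.take_append]
      have h0 : (n-1) - (w.map (cshift (extb s i))).length = 0 := by simp; omega
      rw [h0]
      simp [List.map_take]
    intro hsort
    rw [htake] at hsort
    exact G.first (List.pairwise_map.1 hsort |>.imp fun h => (cshift_lt_iff _ _ _).1 h)
  · intro k1 k2 h12 hk2
    rw [hvlen] at hk2
    by_cases hc2 : k2 + n ≤ w.length
    · rw [window_old w _ _ (show k1 + n ≤ w.length by omega), window_old w _ _ hc2,
        red_map _ (cshift_le_iff _), red_map _ (cshift_le_iff _)]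
      exact G.dist k1 k2 h12 hc2
    · have hk2' : k2 = w.length + 1 - n := by omega
      rw [hk2', hwnew, window_old w _ _ (show k1 + n ≤ w.length by omega),
        red_map _ (cshift_le_iff _)]
      intro heq
      exact hnotcov ⟨k1, by omega, heq⟩
  · rintro ⟨k, hk, hr⟩
    rw [hvlen] at hk
    by_cases hc : k + n ≤ w.length
    · refine G.noinc ⟨k, hc, ?_⟩
      rwa [window_old w _ _ hc, red_map _ (cshift_le_iff _)] at hr
    · have hk' : k = w.length + 1 - n := by omega
      rw [hk', hwnew] at hr
      exact critical hn G hfind hr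

end Step

/-- If the greedy algorithm is started from an `(n-1)`-permutation other than
`12⋯(n-1)`, then its output does not cover `12⋯n`, hence is not a universal
word for `n`-permutations. -/
theorem stmt13 (n : ℕ) (hn : 2 ≤ n) (w0 : List ℕ)
    (hw0 : w0.Perm (List.range' 1 (n - 1))) (hne : w0 ≠ List.range' 1 (n - 1))
    (k : ℕ)
    (hrun : ∀ j < k, greedyStep n (greedyFrom n w0 j) ≠ none)
    (hterm : greedyStep n (greedyFrom n w0 k) = none) :
    ¬ covers (greedyFrom n w0 k) n (List.range' 1 n) ∧
    ¬ (∀ p : List ℕ, p.Perm (List.range' 1 n) →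
        ∃! j, j + n ≤ (greedyFrom n w0 k).length ∧
          red (((greedyFrom n w0 k).drop j).take n) = p) := by
  have goodAll : ∀ j, Good n (greedyFrom n w0 j) := by
    intro j
    induction j with
    | zero => exact good_init n hn w0 hw0 hne
    | succ j ih =>
      cases h : greedyStep n (greedyFrom n w0 j) with
      | none => simpa [greedyFrom, h] using ih
      | some v =>
        have hv : greedyFrom n w0 (j+1) = v := by simp [greedyFrom, h]
        rw [hv]
        exact good_step hn ih h
  constructor
  · exact (goodAll k).noinc
  · intro H
    obtain ⟨j, hj, -⟩ := H (List.range' 1 n) (List.Perm.refl _)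
    exact (goodAll k).noinc ⟨j, hj.1, hj.2⟩
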